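/- Let f : 𝔻 → ℂ be holomorphic. Then f is a Bloch function if and only if f is Lipschitz as a map from 𝔻 equipped with the hyperbolic distance ρ to ℂ with the Euclidean distance; moreover β_f = sup_{z,w∈𝔻, z≠w} |f(z)−f(w)| / ρ(z,w). -/

import Mathlib

open Complex Metric Set
open scoped ENNReal
open Filter Topology

/-- The inverse hyperbolic tangent, `arctanh x = (1/2) log((1+x)/(1-x))`. -/
noncomputable def arctanh (x : ℝ) : ℝ := Real.log ((1 + x) / (1 - x)) / 2

/-- The hyperbolic (Bergman) distance on the unit disk:
`ρ(z,w) = arctanh |(z-w)/(1-conj(w) z)|`. -/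
noncomputable def hypDist (z w : ℂ) : ℝ :=
  arctanh ‖(z - w) / (1 - (starRingEnd ℂ) w * z)‖

/-- The Bloch seminorm as an extended real number:
`β_f = sup_{z ∈ 𝔻} (1-|z|²)|f'(z)|`. -/
noncomputable def blochSemiE (f : ℂ → ℂ) : ℝ≥0∞ :=
  ⨆ z : ball (0 : ℂ) 1, ENNReal.ofReal ((1 - ‖(z : ℂ)‖ ^ 2) * ‖deriv f (z : ℂ)‖)

/-- The Lipschitz number of `f : (𝔻, ρ) → (ℂ, |·|)` as an extended real number:
`sup_{z ≠ w} |f(z)-f(w)|/ρ(z,w)`. -/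
noncomputable def lipNumE (f : ℂ → ℂ) : ℝ≥0∞ :=
  ⨆ p : {p : ball (0 : ℂ) 1 × ball (0 : ℂ) 1 // (p.1 : ℂ) ≠ (p.2 : ℂ)},
    ENNReal.ofReal (‖f (p.1.1 : ℂ) - f (p.1.2 : ℂ)‖ /
      hypDist (p.1.1 : ℂ) (p.1.2 : ℂ))

/-- A holomorphic `f : 𝔻 → ℂ` is Bloch iff it is Lipschitz from `𝔻` with the
hyperbolic distance to `ℂ` with the Euclidean distance; moreover the Bloch
seminorm equals the Lipschitz number `sup_{z ≠ w} |f(z)-f(w)|/ρ(z,w)`. -/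
lemma normSq_identity (a z : ℂ) :
    Complex.normSq (1 - (starRingEnd ℂ) a * z) - Complex.normSq (a - z) =
      (1 - Complex.normSq a) * (1 - Complex.normSq z) := by
  simp only [Complex.normSq_apply, Complex.sub_re, Complex.sub_im, Complex.mul_re,
    Complex.mul_im, Complex.one_re, Complex.one_im, Complex.conj_re, Complex.conj_im]
  ring

lemma one_sub_conj_mul_ne {a z : ℂ} (ha : ‖a‖ < 1) (hz : ‖z‖ < 1) :
    (1 : ℂ) - (starRingEnd ℂ) a * z ≠ 0 := by
  intro h
  have h2 : (1 : ℂ) = (starRingEnd ℂ) a * z := by linear_combination h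
  have : ‖(starRingEnd ℂ) a * z‖ < 1 := by
    rw [norm_mul, RCLike.norm_conj]
    nlinarith [norm_nonneg a, norm_nonneg z]
  rw [← h2] at this; simp at this

lemma arctanh_zero : arctanh 0 = 0 := by simp [arctanh]

lemma arctanh_nonneg {x : ℝ} (h0 : 0 ≤ x) (h1 : x < 1) : 0 ≤ arctanh x := by
  have : (1 : ℝ) ≤ (1 + x) / (1 - x) := by
    rw [le_div_iff₀ (by linarith)]; linarith
  have := Real.log_nonneg this
  simp only [arctanh]; linarith

lemma arctanh_pos {x : ℝ} (h0 : 0 < x) (h1 : x < 1) : 0 < arctanh x := by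
  have : (1 : ℝ) < (1 + x) / (1 - x) := by
    rw [lt_div_iff₀ (by linarith)]; linarith
  have := Real.log_pos this
  simp only [arctanh]; linarith

lemma hasDerivAt_arctanh {x : ℝ} (h1 : -1 < x) (h2 : x < 1) :
    HasDerivAt arctanh (1 / (1 - x ^ 2)) x := by
  have hx1 : (0:ℝ) < 1 + x := by linarith
  have hx2 : (0:ℝ) < 1 - x := by linarith
  have H1 : HasDerivAt (fun y : ℝ => Real.log (1 + y)) (1 / (1 + x)) x := by
    simpa using ((hasDerivAt_id x).const_add 1).log hx1.ne'
  have H2 : HasDerivAt (fun y : ℝ => Real.log (1 - y)) ((-1) / (1 - x)) x := by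
    simpa using ((hasDerivAt_id x).const_sub 1).log hx2.ne'
  have H : HasDerivAt (fun y : ℝ => (Real.log (1 + y) - Real.log (1 - y)) / 2)
      (1 / (1 - x ^ 2)) x := by
    have := (H1.sub H2).div_const 2
    refine this.congr_deriv ?_
    have hne : (1:ℝ) - x ^ 2 ≠ 0 := by nlinarith
    field_simp
    ring
  apply H.congr_of_eventuallyEq
  have hmem : Ioo (-1 : ℝ) 1 ∈ nhds x := (isOpen_Ioo).mem_nhds ⟨h1, h2⟩
  filter_upwards [hmem] with y hy
  simp only [arctanh]
  rw [Real.log_div (by linarith [hy.1] : (1:ℝ) + y ≠ 0) (by linarith [hy.2] : (1:ℝ) - y ≠ 0)]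


lemma pseudo_lt_one {z w : ℂ} (hz : ‖z‖ < 1) (hw : ‖w‖ < 1) :
    ‖(z - w) / (1 - (starRingEnd ℂ) w * z)‖ < 1 := by
  have hne := one_sub_conj_mul_ne hw hz
  have hid := normSq_identity w z
  have h1 : Complex.normSq w < 1 := by
    have e : Complex.normSq w = ‖w‖ ^ 2 := by
      rw [Complex.normSq_eq_norm_sq]
    nlinarith [norm_nonneg w]
  have h2 : Complex.normSq z < 1 := by
    have e : Complex.normSq z = ‖z‖ ^ 2 := by
      rw [Complex.normSq_eq_norm_sq]
    nlinarith [norm_nonneg z]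
  have hlt : Complex.normSq (w - z) < Complex.normSq (1 - (starRingEnd ℂ) w * z) := by
    nlinarith
  have hnorm : ‖w - z‖ < ‖1 - (starRingEnd ℂ) w * z‖ := by
    have := hlt
    rw [Complex.normSq_eq_norm_sq, Complex.normSq_eq_norm_sq] at this
    exact lt_of_pow_lt_pow_left₀ 2 (norm_nonneg _) this
  rw [norm_div, div_lt_one (norm_pos_iff.mpr hne)]
  rwa [show z - w = -(w - z) by ring, norm_neg]

lemma hypDist_nonneg {z w : ℂ} (hz : ‖z‖ < 1) (hw : ‖w‖ < 1) : 0 ≤ hypDist z w :=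
  arctanh_nonneg (norm_nonneg _) (pseudo_lt_one hz hw)

lemma hypDist_self (z : ℂ) : hypDist z z = 0 := by
  simp [hypDist, arctanh_zero]

lemma hypDist_pos {z w : ℂ} (hz : ‖z‖ < 1) (hw : ‖w‖ < 1) (hne : z ≠ w) :
    0 < hypDist z w := by
  apply arctanh_pos _ (pseudo_lt_one hz hw)
  rw [norm_pos_iff]
  exact div_ne_zero (sub_ne_zero.mpr hne) (one_sub_conj_mul_ne hw hz)

lemma integral_arctanh {r : ℝ} (h0 : 0 ≤ r) (h1 : r < 1) :
    ∫ t in (0:ℝ)..1, r / (1 - (t * r) ^ 2) = arctanh r := by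
  have key : ∀ t ∈ uIcc (0:ℝ) 1,
      HasDerivAt (fun s : ℝ => arctanh (s * r)) (r / (1 - (t * r) ^ 2)) t := by
    intro t ht
    rw [uIcc_of_le (by norm_num)] at ht
    have htr1 : -1 < t * r := by nlinarith [ht.1, ht.2]
    have htr2 : t * r < 1 := by nlinarith [ht.1, ht.2]
    have := (hasDerivAt_arctanh htr1 htr2).comp t (hasDerivAt_mul_const r)
    exact this.congr_deriv (by ring)
  have hcont : ContinuousOn (fun t : ℝ => r / (1 - (t * r) ^ 2)) (uIcc (0:ℝ) 1) := by
    apply ContinuousOn.div continuousOn_const (by fun_prop)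
    intro t ht
    rw [uIcc_of_le (by norm_num)] at ht
    have h3 : 0 ≤ t * r := mul_nonneg ht.1 h0
    have h4 : t * r ≤ r := by nlinarith [ht.1, ht.2]
    nlinarith
  have := intervalIntegral.integral_eq_sub_of_hasDerivAt key
    (hcont.intervalIntegrable)
  rw [this]
  simp [arctanh_zero]

lemma key_bound {g g' : ℂ → ℂ} {M : ℝ} (hM0 : 0 ≤ M)
    (hg : ∀ ζ ∈ ball (0:ℂ) 1, HasDerivAt g (g' ζ) ζ)
    (hc : ContinuousOn g' (ball (0:ℂ) 1))
    (hMb : ∀ ζ ∈ ball (0:ℂ) 1, ‖g' ζ‖ * (1 - ‖ζ‖ ^ 2) ≤ M)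
    {c : ℂ} (hcb : ‖c‖ < 1) :
    ‖g c - g 0‖ ≤ M * arctanh ‖c‖ := by
  set r := ‖c‖ with hr
  have hr0 : 0 ≤ r := norm_nonneg c
  have hmem : ∀ t : ℝ, t ∈ uIcc (0:ℝ) 1 → (t : ℂ) * c ∈ ball (0:ℂ) 1 := by
    intro t ht
    rw [uIcc_of_le (by norm_num)] at ht
    rw [mem_ball_zero_iff, norm_mul, Complex.norm_real, Real.norm_eq_abs,
      _root_.abs_of_nonneg ht.1]
    nlinarith [ht.1, ht.2]
  have hderiv : ∀ t ∈ uIcc (0:ℝ) 1,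
      HasDerivAt (fun s : ℝ => g ((s : ℂ) * c)) (g' ((t : ℂ) * c) * c) t := by
    intro t ht
    have h1 : HasDerivAt (fun ζ : ℂ => g (ζ * c)) (g' ((t:ℂ) * c) * c) (t : ℂ) :=
      (hg _ (hmem t ht)).comp (t : ℂ) (hasDerivAt_mul_const c)
    exact h1.comp_ofReal
  have hint : IntervalIntegrable (fun t : ℝ => g' ((t : ℂ) * c) * c)
      MeasureTheory.volume 0 1 := by
    apply ContinuousOn.intervalIntegrable
    apply ContinuousOn.mul _ continuousOn_const
    exact hc.comp (by fun_prop) hmem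
  have hFTC := intervalIntegral.integral_eq_sub_of_hasDerivAt hderiv hint
  have heq : g c - g 0 = ∫ t in (0:ℝ)..1, g' ((t : ℂ) * c) * c := by
    rw [hFTC]; norm_num
  rw [heq]
  have hbound : ∀ t ∈ Set.uIoc (0:ℝ) 1, ‖g' ((t : ℂ) * c) * c‖ ≤ M * (r / (1 - (t * r) ^ 2)) := by
    intro t ht
    rw [uIoc_of_le (by norm_num)] at ht
    have ht0 : 0 < t := ht.1
    have ht1 : t ≤ 1 := ht.2
    have hmem' : (t : ℂ) * c ∈ ball (0:ℂ) 1 := by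
      apply hmem; rw [uIcc_of_le (by norm_num)]; exact ⟨ht0.le, ht1⟩
    have hn : ‖(t : ℂ) * c‖ = t * r := by
      rw [norm_mul, Complex.norm_real, Real.norm_eq_abs, _root_.abs_of_nonneg ht0.le]
    have htr : 0 ≤ t * r := mul_nonneg ht0.le hr0
    have htr1 : t * r < 1 := by
      have := mem_ball_zero_iff.mp hmem'; rwa [hn] at this
    have hd : 0 < 1 - (t * r) ^ 2 := by nlinarith
    have hb := hMb _ hmem'
    rw [hn] at hb
    rw [norm_mul, ← hr]
    rw [mul_div_assoc'] at *
    rw [le_div_iff₀ hd]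
    nlinarith [norm_nonneg (g' ((t:ℂ) * c))]
  have hgint : IntervalIntegrable (fun t : ℝ => M * (r / (1 - (t * r) ^ 2)))
      MeasureTheory.volume 0 1 := by
    apply ContinuousOn.intervalIntegrable
    apply ContinuousOn.mul continuousOn_const
    apply ContinuousOn.div continuousOn_const (by fun_prop)
    intro t ht
    rw [uIcc_of_le (by norm_num)] at ht
    have h3 : 0 ≤ t * r := mul_nonneg ht.1 hr0
    have h4 : t * r ≤ r := by nlinarith [ht.1, ht.2]
    have hr1 : r < 1 := hcb
    nlinarith
  have := intervalIntegral.norm_integral_le_abs_of_norm_le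
    (MeasureTheory.ae_restrict_of_forall_mem measurableSet_uIoc hbound) hgint
  refine this.trans ?_
  rw [intervalIntegral.integral_const_mul, integral_arctanh hr0 hcb]
  rw [_root_.abs_of_nonneg (mul_nonneg hM0 (arctanh_nonneg hr0 hcb))]

lemma norm_sq_eq (u : ℂ) : ‖u‖ ^ 2 = Complex.normSq u := by
  rw [Complex.normSq_eq_norm_sq]

lemma moebius_mem_ball {w ζ : ℂ} (hw : ‖w‖ < 1) (hζ : ‖ζ‖ < 1) :
    ‖(w - ζ) / (1 - (starRingEnd ℂ) w * ζ)‖ < 1 := by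
  have h := pseudo_lt_one hζ hw
  rwa [show (ζ - w) / (1 - (starRingEnd ℂ) w * ζ) =
    -((w - ζ) / (1 - (starRingEnd ℂ) w * ζ)) by ring, norm_neg] at h

lemma one_sub_norm_moebius_sq {w ζ : ℂ} (hw : ‖w‖ < 1) (hζ : ‖ζ‖ < 1) :
    1 - ‖(w - ζ) / (1 - (starRingEnd ℂ) w * ζ)‖ ^ 2 =
      (1 - Complex.normSq w) * (1 - Complex.normSq ζ) /
        Complex.normSq (1 - (starRingEnd ℂ) w * ζ) := by
  have hne := one_sub_conj_mul_ne hw hζ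
  have hpos : 0 < Complex.normSq (1 - (starRingEnd ℂ) w * ζ) :=
    Complex.normSq_pos.mpr hne
  rw [norm_div, div_pow, norm_sq_eq, norm_sq_eq]
  rw [eq_div_iff hpos.ne']
  have hid := normSq_identity w ζ
  rw [sub_mul, one_mul, div_mul_cancel₀ _ hpos.ne']
  linarith [hid]

lemma lipschitz_of_bloch {f : ℂ → ℂ} (hf : DifferentiableOn ℂ f (ball (0 : ℂ) 1))
    {M : ℝ} (hM : ∀ ζ ∈ ball (0:ℂ) 1, (1 - ‖ζ‖ ^ 2) * ‖deriv f ζ‖ ≤ M)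
    {z w : ℂ} (hz : z ∈ ball (0:ℂ) 1) (hw : w ∈ ball (0:ℂ) 1) :
    ‖f z - f w‖ ≤ M * hypDist z w := by
  rw [mem_ball_zero_iff] at hz hw
  have hM0 : 0 ≤ M := by
    have h0 := hM 0 (by simp)
    simp only [norm_zero] at h0
    nlinarith [norm_nonneg (deriv f 0)]
  set φ : ℂ → ℂ := fun ζ => (w - ζ) / (1 - (starRingEnd ℂ) w * ζ) with hφ
  set g' : ℂ → ℂ := fun ζ =>
    deriv f (φ ζ) * ((w * (starRingEnd ℂ) w - 1) / (1 - (starRingEnd ℂ) w * ζ) ^ 2)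
    with hg'
  have hφmem : ∀ ζ : ℂ, ‖ζ‖ < 1 → ‖φ ζ‖ < 1 := fun ζ h => moebius_mem_ball hw h
  have hφd : ∀ ζ : ℂ, ‖ζ‖ < 1 →
      HasDerivAt φ ((w * (starRingEnd ℂ) w - 1) / (1 - (starRingEnd ℂ) w * ζ) ^ 2) ζ := by
    intro ζ hζ
    have hne := one_sub_conj_mul_ne hw hζ
    have h1 : HasDerivAt (fun ζ : ℂ => w - ζ) (-1) ζ := by
      simpa using (hasDerivAt_id ζ).const_sub w
    have h2 : HasDerivAt (fun ζ : ℂ => 1 - (starRingEnd ℂ) w * ζ) (-((starRingEnd ℂ) w)) ζ := by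
      simpa using ((hasDerivAt_id ζ).const_mul ((starRingEnd ℂ) w)).const_sub 1
    have := h1.div h2 hne
    refine this.congr_deriv ?_
    field_simp
    ring
  have hgd : ∀ ζ ∈ ball (0:ℂ) 1, HasDerivAt (fun ζ => f (φ ζ)) (g' ζ) ζ := by
    intro ζ hζ
    rw [mem_ball_zero_iff] at hζ
    have hfd : HasDerivAt f (deriv f (φ ζ)) (φ ζ) :=
      (hf.differentiableAt (isOpen_ball.mem_nhds (mem_ball_zero_iff.mpr (hφmem ζ hζ)))).hasDerivAt
    exact hfd.comp ζ (hφd ζ hζ)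
  have hφcont : ContinuousOn φ (ball (0:ℂ) 1) := by
    apply ContinuousOn.div (by fun_prop) (by fun_prop)
    intro ζ hζ
    exact one_sub_conj_mul_ne hw (mem_ball_zero_iff.mp hζ)
  have hg'cont : ContinuousOn g' (ball (0:ℂ) 1) := by
    apply ContinuousOn.mul
    · exact ((hf.analyticOnNhd isOpen_ball).deriv.continuousOn).comp hφcont
        (fun ζ hζ => mem_ball_zero_iff.mpr (hφmem ζ (mem_ball_zero_iff.mp hζ)))
    · apply ContinuousOn.div continuousOn_const (by fun_prop)
      intro ζ hζ
      exact pow_ne_zero 2 (one_sub_conj_mul_ne hw (mem_ball_zero_iff.mp hζ))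
  have hg'bound : ∀ ζ ∈ ball (0:ℂ) 1, ‖g' ζ‖ * (1 - ‖ζ‖ ^ 2) ≤ M := by
    intro ζ hζ
    rw [mem_ball_zero_iff] at hζ
    have hne := one_sub_conj_mul_ne hw hζ
    have hpos : 0 < Complex.normSq (1 - (starRingEnd ℂ) w * ζ) := Complex.normSq_pos.mpr hne
    have hDnorm : ‖(w * (starRingEnd ℂ) w - 1) / (1 - (starRingEnd ℂ) w * ζ) ^ 2‖ =
        (1 - Complex.normSq w) / Complex.normSq (1 - (starRingEnd ℂ) w * ζ) := by
      rw [norm_div, norm_pow, norm_sq_eq]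
      congr 1
      rw [Complex.mul_conj]
      rw [show (Complex.normSq w : ℂ) - 1 = ((Complex.normSq w - 1 : ℝ) : ℂ) by push_cast; ring]
      rw [Complex.norm_real, Real.norm_eq_abs, abs_sub_comm, _root_.abs_of_nonneg]
      have : Complex.normSq w = ‖w‖ ^ 2 := (norm_sq_eq w).symm
      nlinarith [norm_nonneg w]
    have key : ‖g' ζ‖ * (1 - ‖ζ‖ ^ 2) = (1 - ‖φ ζ‖ ^ 2) * ‖deriv f (φ ζ)‖ := by
      rw [hg', norm_mul, hDnorm]
      rw [show (1 : ℝ) - ‖φ ζ‖ ^ 2 =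
        (1 - Complex.normSq w) * (1 - Complex.normSq ζ) /
          Complex.normSq (1 - (starRingEnd ℂ) w * ζ) from one_sub_norm_moebius_sq hw hζ]
      rw [norm_sq_eq]
      field_simp
    rw [key]
    exact hM (φ ζ) (mem_ball_zero_iff.mpr (hφmem ζ hζ))
  -- involution facts
  have hwc : (1 : ℂ) - w * (starRingEnd ℂ) w ≠ 0 := by
    have := one_sub_conj_mul_ne hw hw
    intro h; apply this
    rw [mul_comm] at h; exact h
  have hφ0 : φ 0 = w := by rw [hφ]; simp
  have hφφ : φ (φ z) = z := by
    have hne := one_sub_conj_mul_ne hw hz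
    have hne2 : (1 : ℂ) - (starRingEnd ℂ) w * φ z ≠ 0 :=
      one_sub_conj_mul_ne hw (hφmem z hz)
    have hwc' : (1 : ℂ) - (starRingEnd ℂ) w * w ≠ 0 := one_sub_conj_mul_ne hw hw
    rw [hφ]
    simp only
    have e1 : (1:ℂ) - (starRingEnd ℂ) w * ((w - z) / (1 - (starRingEnd ℂ) w * z)) =
        (1 - (starRingEnd ℂ) w * w) / (1 - (starRingEnd ℂ) w * z) := by
      field_simp
      ring
    have e2 : w - (w - z) / (1 - (starRingEnd ℂ) w * z) =
        z * (1 - (starRingEnd ℂ) w * w) / (1 - (starRingEnd ℂ) w * z) := by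
      rw [eq_div_iff hne, sub_mul, div_mul_cancel₀ _ hne]
      ring
    rw [e1, e2, div_div_div_cancel_right₀, mul_div_assoc, div_self hwc', mul_one]
    exact hne
  have hc : ‖φ z‖ < 1 := hφmem z hz
  have := key_bound hM0 hgd hg'cont hg'bound hc
  rw [hφφ, hφ0] at this
  refine this.trans ?_
  have : ‖φ z‖ = ‖(z - w) / (1 - (starRingEnd ℂ) w * z)‖ := by
    rw [hφ, norm_div, norm_div, show w - z = -(z - w) by ring, norm_neg]
  rw [hypDist, ← this]

lemma bloch_le_of_lip {f : ℂ → ℂ} (hf : DifferentiableOn ℂ f (ball (0 : ℂ) 1))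
    {L : ℝ} (hL : ∀ u ∈ ball (0:ℂ) 1, ∀ v ∈ ball (0:ℂ) 1, ‖f u - f v‖ ≤ L * hypDist u v)
    {z : ℂ} (hz : z ∈ ball (0:ℂ) 1) :
    (1 - ‖z‖ ^ 2) * ‖deriv f z‖ ≤ L := by
  have hz' : ‖z‖ < 1 := mem_ball_zero_iff.mp hz
  set d : ℝ := 1 - ‖z‖ ^ 2 with hd_def
  have hd : 0 < d := by nlinarith [norm_nonneg z]
  set den : ℝ → ℝ := fun t => ‖(1:ℂ) - (starRingEnd ℂ) z * (z + t)‖ with hden_def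
  have hden0 : den 0 = d := by
    rw [hden_def]
    simp only [Complex.ofReal_zero, add_zero]
    rw [show (starRingEnd ℂ) z * z = ((Complex.normSq z : ℝ) : ℂ) by
      rw [mul_comm, Complex.mul_conj]]
    rw [show (1:ℂ) - ((Complex.normSq z : ℝ) : ℂ) = (((1 - Complex.normSq z : ℝ)) : ℂ) by
      push_cast; ring]
    rw [Complex.norm_real, Real.norm_eq_abs, _root_.abs_of_nonneg]
    · rw [hd_def, norm_sq_eq]
    · nlinarith [norm_sq_eq z, norm_nonneg z]
  have hdencont : Tendsto den (nhds 0) (nhds d) := by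
    have : Continuous den := by rw [hden_def]; fun_prop
    have h := this.tendsto 0
    rwa [hden0] at h
  have hdenW : Tendsto den (nhdsWithin 0 (Ioi 0)) (nhds d) :=
    hdencont.mono_left nhdsWithin_le_nhds
  have ev2 : ∀ᶠ t : ℝ in nhdsWithin 0 (Ioi 0), 0 < den t :=
    hdenW.eventually_const_lt hd
  have ev1 : ∀ᶠ t : ℝ in nhdsWithin 0 (Ioi 0), z + (t:ℂ) ∈ ball (0:ℂ) 1 := by
    have hcont : Tendsto (fun t : ℝ => ‖z + (t:ℂ)‖) (nhdsWithin 0 (Ioi 0)) (nhds ‖z‖) := by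
      have : Continuous fun t : ℝ => ‖z + (t:ℂ)‖ := by fun_prop
      have h := this.tendsto 0
      simp only [Complex.ofReal_zero, add_zero] at h
      exact h.mono_left nhdsWithin_le_nhds
    filter_upwards [hcont.eventually_lt_const hz'] with t ht
    exact mem_ball_zero_iff.mpr ht
  have evpos : ∀ᶠ t : ℝ in nhdsWithin 0 (Ioi 0), 0 < t :=
    eventually_mem_nhdsWithin
  -- ψ
  set ψ : ℝ → ℝ := fun t => ‖((z + (t:ℂ)) - z) / ((1:ℂ) - (starRingEnd ℂ) z * (z + t))‖
    with hψ_def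
  have hψ_eq : ∀ t : ℝ, 0 < t → ψ t = t / den t := by
    intro t ht
    rw [hψ_def, hden_def]
    simp only [add_sub_cancel_left, norm_div, Complex.norm_real, Real.norm_eq_abs,
      _root_.abs_of_nonneg ht.le]
  have hψ0 : Tendsto ψ (nhdsWithin 0 (Ioi 0)) (nhds 0) := by
    have hca : ContinuousAt (fun t : ℝ =>
        ((z + (t:ℂ)) - z) / ((1:ℂ) - (starRingEnd ℂ) z * (z + t))) 0 := by
      apply ContinuousAt.div (by fun_prop) (by fun_prop)
      simp only [Complex.ofReal_zero, add_zero]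
      exact one_sub_conj_mul_ne hz' hz'
    have h := hca.norm.tendsto
    simp only [Complex.ofReal_zero, add_zero, sub_self, zero_div, norm_zero] at h
    exact h.mono_left nhdsWithin_le_nhds
  have hψpos : ∀ᶠ t : ℝ in nhdsWithin 0 (Ioi 0), 0 < ψ t := by
    filter_upwards [ev2, evpos] with t h2 hp
    rw [hψ_eq t hp]
    positivity
  have hψW : Tendsto ψ (nhdsWithin 0 (Ioi 0)) (nhdsWithin 0 (Ioi 0)) := by
    rw [tendsto_nhdsWithin_iff]
    exact ⟨hψ0, hψpos⟩
  -- arctanh slope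
  have hQ : Tendsto (fun x : ℝ => arctanh x / x) (nhdsWithin 0 (Ioi 0)) (nhds 1) := by
    have h := hasDerivAt_iff_tendsto_slope.mp
      (hasDerivAt_arctanh (by norm_num : (-1:ℝ) < 0) (by norm_num : (0:ℝ) < 1))
    norm_num at h
    have h2 : Tendsto (slope arctanh 0) (nhdsWithin 0 (Ioi 0)) (nhds 1) := by
      have := h.mono_left (nhdsWithin_mono 0 (fun x hx => ne_of_gt hx))
      exact this
    apply h2.congr
    intro x
    rw [slope_def_field, arctanh_zero, sub_zero, sub_zero]
  have harc : Tendsto (fun t : ℝ => arctanh (ψ t) / ψ t) (nhdsWithin 0 (Ioi 0)) (nhds 1) :=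
    hQ.comp hψW
  -- ψ t / t
  have hrat : Tendsto (fun t : ℝ => ψ t / t) (nhdsWithin 0 (Ioi 0)) (nhds (1 / d)) := by
    have h1 : Tendsto (fun t : ℝ => 1 / den t) (nhdsWithin 0 (Ioi 0)) (nhds (1 / d)) :=
      tendsto_const_nhds.div hdenW hd.ne'
    apply h1.congr'
    filter_upwards [ev2, evpos] with t h2 hp
    rw [hψ_eq t hp]
    field_simp
  -- RHS tendsto
  have hRHS : Tendsto (fun t : ℝ => L * (hypDist (z + (t:ℂ)) z / t))
      (nhdsWithin 0 (Ioi 0)) (nhds (L * (1 / d))) := by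
    apply Tendsto.const_mul
    have hprod := harc.mul hrat
    rw [one_mul] at hprod
    apply hprod.congr'
    filter_upwards [hψpos] with t hp
    rw [hypDist]
    rw [show arctanh ‖(z + (t:ℂ) - z) / (1 - (starRingEnd ℂ) z * (z + (t:ℂ)))‖ =
      arctanh (ψ t) from rfl]
    field_simp
  -- LHS tendsto
  have hder : HasDerivAt f (deriv f z) z :=
    (hf.differentiableAt (isOpen_ball.mem_nhds hz)).hasDerivAt
  have hslope := hasDerivAt_iff_tendsto_slope.mp hder
  have hm : Tendsto (fun t : ℝ => z + (t:ℂ)) (nhdsWithin (0:ℝ) (Ioi 0)) (nhdsWithin z {z}ᶜ) := by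
    rw [tendsto_nhdsWithin_iff]
    constructor
    · have hco : Continuous fun t : ℝ => z + (t:ℂ) := by fun_prop
      have h := hco.tendsto 0
      simp only [Complex.ofReal_zero, add_zero] at h
      exact h.mono_left nhdsWithin_le_nhds
    · filter_upwards [evpos] with t ht
      simp only [mem_compl_iff, mem_singleton_iff]
      intro h
      have h2 : (t:ℂ) = 0 := by linear_combination h
      rw [Complex.ofReal_eq_zero] at h2
      exact ht.ne' h2
  have hLHS : Tendsto (fun t : ℝ => ‖f (z + (t:ℂ)) - f z‖ / t) (nhdsWithin (0:ℝ) (Ioi 0))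
      (nhds ‖deriv f z‖) := by
    have h := (hslope.comp hm).norm
    apply h.congr'
    filter_upwards [evpos] with t ht
    simp only [Function.comp_apply, slope_def_field]
    rw [add_sub_cancel_left, norm_div, Complex.norm_real, Real.norm_eq_abs,
      _root_.abs_of_nonneg ht.le]
  have hineq : ∀ᶠ t : ℝ in nhdsWithin (0:ℝ) (Ioi 0),
      ‖f (z + (t:ℂ)) - f z‖ / t ≤ L * (hypDist (z + (t:ℂ)) z / t) := by
    filter_upwards [ev1, evpos] with t h1 hp
    have hle := hL (z + t) h1 z hz
    rw [mul_div_assoc']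
    exact (div_le_div_iff_of_pos_right hp).mpr hle
  have hfinal : ‖deriv f z‖ ≤ L * (1 / d) :=
    le_of_tendsto_of_tendsto hLHS hRHS hineq
  calc (1 - ‖z‖ ^ 2) * ‖deriv f z‖ = d * ‖deriv f z‖ := by rw [hd_def]
    _ ≤ d * (L * (1 / d)) := mul_le_mul_of_nonneg_left hfinal hd.le
    _ = L := by field_simp

theorem blochSemi_eq_lipschitz_number
    (f : ℂ → ℂ) (hf : DifferentiableOn ℂ f (ball (0 : ℂ) 1)) :
    (blochSemiE f ≠ ⊤ ↔
      ∃ L : ℝ, ∀ z ∈ ball (0 : ℂ) 1, ∀ w ∈ ball (0 : ℂ) 1,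
        ‖f z - f w‖ ≤ L * hypDist z w) ∧
    blochSemiE f = lipNumE f := by
  have hball : ∀ z : ℂ, z ∈ ball (0:ℂ) 1 → ‖z‖ < 1 := fun z h => mem_ball_zero_iff.mp h
  have stepBound : blochSemiE f ≠ ⊤ →
      ∀ ζ ∈ ball (0:ℂ) 1, (1 - ‖ζ‖ ^ 2) * ‖deriv f ζ‖ ≤ (blochSemiE f).toReal := by
    intro htop ζ hζ
    have h1 : ENNReal.ofReal ((1 - ‖ζ‖ ^ 2) * ‖deriv f ζ‖) ≤ blochSemiE f :=
      le_iSup (fun z : ball (0:ℂ) 1 =>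
        ENNReal.ofReal ((1 - ‖(z:ℂ)‖ ^ 2) * ‖deriv f (z:ℂ)‖)) ⟨ζ, hζ⟩
    exact (ENNReal.ofReal_le_iff_le_toReal htop).mp h1
  have main : blochSemiE f = lipNumE f := by
    apply le_antisymm
    · by_cases hl : lipNumE f = ⊤
      · rw [hl]; exact le_top
      apply iSup_le
      rintro ⟨ζ, hζ⟩
      have hLip : ∀ z ∈ ball (0:ℂ) 1, ∀ w ∈ ball (0:ℂ) 1,
          ‖f z - f w‖ ≤ (lipNumE f).toReal * hypDist z w := by
        intro z hz w hw
        by_cases hzw : z = w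
        · subst hzw
          rw [hypDist_self]
          simp
        · have hkey : ENNReal.ofReal (‖f z - f w‖ / hypDist z w) ≤ lipNumE f :=
            le_iSup (fun p : {p : ball (0:ℂ) 1 × ball (0:ℂ) 1 // (p.1 : ℂ) ≠ (p.2 : ℂ)} =>
              ENNReal.ofReal (‖f (p.1.1 : ℂ) - f (p.1.2 : ℂ)‖ /
                hypDist (p.1.1 : ℂ) (p.1.2 : ℂ)))
              ⟨(⟨z, hz⟩, ⟨w, hw⟩), hzw⟩
          have h2 := (ENNReal.ofReal_le_iff_le_toReal hl).mp hkey
          have hpos := hypDist_pos (hball z hz) (hball w hw) hzw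
          rw [div_le_iff₀ hpos] at h2
          linarith
      have h3 := bloch_le_of_lip hf hLip hζ
      calc ENNReal.ofReal ((1 - ‖(ζ:ℂ)‖ ^ 2) * ‖deriv f ζ‖)
          ≤ ENNReal.ofReal ((lipNumE f).toReal) := ENNReal.ofReal_le_ofReal h3
        _ ≤ lipNumE f := ENNReal.ofReal_toReal_le
    · by_cases hb : blochSemiE f = ⊤
      · rw [hb]; exact le_top
      apply iSup_le
      rintro ⟨⟨⟨z, hz⟩, ⟨w, hw⟩⟩, hzw⟩
      simp only at hzw ⊢
      have hle := lipschitz_of_bloch hf (stepBound hb) hz hw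
      have hpos := hypDist_pos (hball z hz) (hball w hw) hzw
      have h4 : ‖f z - f w‖ / hypDist z w ≤ (blochSemiE f).toReal := by
        rw [div_le_iff₀ hpos]
        exact hle
      calc ENNReal.ofReal (‖f z - f w‖ / hypDist z w)
          ≤ ENNReal.ofReal ((blochSemiE f).toReal) := ENNReal.ofReal_le_ofReal h4
        _ ≤ blochSemiE f := ENNReal.ofReal_toReal_le
  refine ⟨⟨?_, ?_⟩, main⟩
  · intro htop
    exact ⟨(blochSemiE f).toReal,
      fun z hz w hw => lipschitz_of_bloch hf (stepBound htop) hz hw⟩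
  · rintro ⟨L, hL⟩
    have hle : blochSemiE f ≤ ENNReal.ofReal L := by
      apply iSup_le
      rintro ⟨ζ, hζ⟩
      exact ENNReal.ofReal_le_ofReal (bloch_le_of_lip hf hL hζ)
    exact ne_top_of_le_ne_top ENNReal.ofReal_ne_top hle
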